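/- For γ > 1, the integrals I(γ) = ∫_0^∞ (s+1)^{-(γ+2)/2}(s+2)^{(γ-1)/2} ds satisfy the recursion I(γ) = (2/(γ+1))·((γ+2)/2 · I(γ+2) - 2^{(γ+1)/2}). -/

import Mathlib

open Real MeasureTheory

lemma aux_integrable {a b : ℝ} (hab : a + b < -1) (hb : 0 ≤ b) :
    IntegrableOn (fun s : ℝ => (s + 1) ^ a * (s + 2) ^ b) (Set.Ioi 0) := by
  have hcont : ContinuousOn (fun s : ℝ => (s + 1) ^ a * (s + 2) ^ b) (Set.Ioi 0) := by
    apply ContinuousOn.mul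
    · exact (continuousOn_id.add continuousOn_const).rpow_const
        (fun x hx => Or.inl (by simp only [Set.mem_Ioi] at hx; simp; linarith))
    · exact (continuousOn_id.add continuousOn_const).rpow_const
        (fun x hx => Or.inl (by simp only [Set.mem_Ioi] at hx; simp; linarith))
  have hshift : IntegrableOn (fun s : ℝ => (s + 1) ^ (a + b)) (Set.Ioi 0) := by
    have h := integrableOn_Ioi_rpow_of_lt hab one_pos
    have := ((measurePreserving_add_right volume (1:ℝ)).integrableOn_comp_preimage
      (MeasurableEquiv.addRight (1:ℝ)).measurableEmbedding
      (f := fun t : ℝ => t ^ (a + b)) (s := Set.Ioi 1)).mpr h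
    have hpre : (fun x : ℝ => x + 1) ⁻¹' Set.Ioi 1 = Set.Ioi 0 := by
      ext x; simp
    simpa [hpre, Function.comp_def] using this
  have hdom : IntegrableOn (fun s : ℝ => 2 ^ b * (s + 1) ^ (a + b)) (Set.Ioi 0) :=
    hshift.const_mul _
  refine Integrable.mono hdom (hcont.aestronglyMeasurable measurableSet_Ioi) ?_
  filter_upwards [ae_restrict_mem measurableSet_Ioi] with s hs
  simp only [Set.mem_Ioi] at hs
  have h1 : (0:ℝ) < s + 1 := by linarith
  have h2 : (0:ℝ) < s + 2 := by linarith
  rw [Real.norm_of_nonneg (by positivity), Real.norm_of_nonneg (by positivity)]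
  have hle : (s + 2) ^ b ≤ (2 * (s + 1)) ^ b :=
    Real.rpow_le_rpow h2.le (by linarith) hb
  calc (s + 1) ^ a * (s + 2) ^ b ≤ (s + 1) ^ a * (2 * (s + 1)) ^ b := by
        exact mul_le_mul_of_nonneg_left hle (Real.rpow_nonneg h1.le a)
    _ = 2 ^ b * (s + 1) ^ (a + b) := by
        rw [Real.mul_rpow (by norm_num) h1.le, Real.rpow_add h1]; ring

theorem I_recursion (γ : ℝ) (hγ : 1 < γ)
    (I : ℝ → ℝ)
    (hI : ∀ g : ℝ, I g =
      ∫ s in Set.Ioi (0 : ℝ), (s + 1) ^ (-(g + 2) / 2) * (s + 2) ^ ((g - 1) / 2)) :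
    I γ = 2 / (γ + 1) * ((γ + 2) / 2 * I (γ + 2) - 2 ^ ((γ + 1) / 2)) := by
  set p : ℝ := -(γ + 2) / 2 with hp
  set q : ℝ := (γ + 1) / 2 with hq
  set F : ℝ → ℝ := fun s => (s + 1) ^ p * (s + 2) ^ q with hF
  set F' : ℝ → ℝ := fun s =>
    -(γ + 2) / 2 * ((s + 1) ^ (-(γ + 2 + 2) / 2) * (s + 2) ^ ((γ + 2 - 1) / 2))
    + (γ + 1) / 2 * ((s + 1) ^ (-(γ + 2) / 2) * (s + 2) ^ ((γ - 1) / 2)) with hF'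
  -- derivative
  have hderiv : ∀ s ∈ Set.Ici (0:ℝ), HasDerivAt F (F' s) s := by
    intro s hs
    simp only [Set.mem_Ici] at hs
    have h1 : (0:ℝ) < s + 1 := by linarith
    have h2 : (0:ℝ) < s + 2 := by linarith
    have d1 : HasDerivAt (fun x : ℝ => (x + 1) ^ p) (p * (s + 1) ^ (p - 1) * 1) s :=
      (Real.hasDerivAt_rpow_const (p := p) (Or.inl h1.ne')).comp (h₂ := fun y : ℝ => y ^ p) s
        ((hasDerivAt_id s).add_const 1)
    have d2 : HasDerivAt (fun x : ℝ => (x + 2) ^ q) (q * (s + 2) ^ (q - 1) * 1) s :=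
      (Real.hasDerivAt_rpow_const (p := q) (Or.inl h2.ne')).comp (h₂ := fun y : ℝ => y ^ q) s
        ((hasDerivAt_id s).add_const 2)
    have := d1.mul d2
    refine HasDerivAt.congr_deriv this ?_
    have e1 : p - 1 = -(γ + 2 + 2) / 2 := by rw [hp]; ring
    have e2 : q - 1 = (γ - 1) / 2 := by rw [hq]; ring
    have e3 : q = (γ + 2 - 1) / 2 := by rw [hq]; ring
    rw [hF', e1, e2]
    rw [show -(γ + 2) / 2 = p by rw [hp]]
    rw [show (γ + 2 - 1) / 2 = q by rw [hq]; ring]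
    ring
  -- integrability of pieces
  have hint1 : IntegrableOn
      (fun s : ℝ => (s + 1) ^ (-(γ + 2 + 2) / 2) * (s + 2) ^ ((γ + 2 - 1) / 2))
      (Set.Ioi 0) := by
    apply aux_integrable <;> [skip; skip] <;> nlinarith [hγ]
  have hint2 : IntegrableOn
      (fun s : ℝ => (s + 1) ^ (-(γ + 2) / 2) * (s + 2) ^ ((γ - 1) / 2))
      (Set.Ioi 0) := by
    apply aux_integrable <;> nlinarith [hγ]
  have hF'int : IntegrableOn F' (Set.Ioi 0) :=
    (hint1.const_mul _).add (hint2.const_mul _)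
  -- limit at infinity
  have htend : Filter.Tendsto F Filter.atTop (nhds 0) := by
    have hb : Filter.Tendsto (fun s : ℝ => 2 ^ q * (s + 1) ^ (-(1/2) : ℝ))
        Filter.atTop (nhds 0) := by
      have h0 : Filter.Tendsto (fun s : ℝ => s + 1) Filter.atTop Filter.atTop :=
        Filter.tendsto_atTop_add_const_right _ 1 Filter.tendsto_id
      have := (tendsto_rpow_neg_atTop (by norm_num : (0:ℝ) < 1/2)).comp h0
      simpa using this.const_mul ((2:ℝ) ^ q)
    apply squeeze_zero' (Filter.eventually_atTop.mpr ⟨0, fun s hs => ?_⟩)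
      (Filter.eventually_atTop.mpr ⟨0, fun s hs => ?_⟩) hb
    · have h1 : (0:ℝ) < s + 1 := by linarith
      have h2 : (0:ℝ) < s + 2 := by linarith
      positivity
    · have h1 : (0:ℝ) < s + 1 := by linarith
      have h2 : (0:ℝ) < s + 2 := by linarith
      have hqpos : (0:ℝ) ≤ q := by rw [hq]; linarith
      have hle : (s + 2) ^ q ≤ (2 * (s + 1)) ^ q :=
        Real.rpow_le_rpow h2.le (by linarith) hqpos
      calc F s ≤ (s + 1) ^ p * (2 * (s + 1)) ^ q :=
            mul_le_mul_of_nonneg_left hle (Real.rpow_nonneg h1.le p)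
        _ = 2 ^ q * (s + 1) ^ (p + q) := by
            rw [Real.mul_rpow (by norm_num) h1.le, Real.rpow_add h1]; ring
        _ = 2 ^ q * (s + 1) ^ (-(1/2) : ℝ) := by
            congr 1; rw [hp, hq]; ring_nf
  -- FTC
  have hFTC : ∫ s in Set.Ioi (0:ℝ), F' s = 0 - F 0 :=
    integral_Ioi_of_hasDerivAt_of_tendsto' hderiv hF'int htend
  have hF0 : F 0 = 2 ^ ((γ + 1) / 2) := by
    simp [hF, hq, Real.one_rpow]
  have hsplit : ∫ s in Set.Ioi (0:ℝ), F' s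
      = -(γ + 2) / 2 * I (γ + 2) + (γ + 1) / 2 * I γ := by
    rw [hF', MeasureTheory.integral_add (hint1.const_mul _) (hint2.const_mul _),
      MeasureTheory.integral_const_mul, MeasureTheory.integral_const_mul,
      hI γ, hI (γ + 2)]
  rw [hsplit, hF0] at hFTC
  have hne : γ + 1 ≠ 0 := by linarith
  field_simp
  linarith [hFTC]
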